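/- 𝒢-spec R satisfies: (a) for every w ∈ W and every prime ideal P ∈ spec_w R, the ideal (P : G_w) is a 𝒢-prime ideal contained in P that contains every 𝒢-semiprime ideal of R contained in P; (b) if Q ∈ 𝒢-spec_w R and P is a prime ideal of R minimal over Q, then P ∈ spec_w R and Q = (P : G_w). -/

import Mathlib

open MvPolynomial

/-- The action of `h ∈ (kˣ)ⁿ` on `k[y₁,…,yₙ]` by `yᵢ ↦ hᵢ yᵢ`. -/
noncomputable def tact {k : Type*} [CommSemiring k] {n : ℕ} (h : Fin n → kˣ) :
    MvPolynomial (Fin n) k →ₐ[k] MvPolynomial (Fin n) k :=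
  aeval fun i => (h i : k) • X i

/-- `(I : G) = ⋂_{g ∈ G} g(I)` for a subgroup `G` of the torus `(kˣ)ⁿ`. -/
noncomputable def resT {k : Type*} [CommSemiring k] {n : ℕ} (G : Subgroup (Fin n → kˣ))
    (I : Ideal (MvPolynomial (Fin n) k)) : Ideal (MvPolynomial (Fin n) k) :=
  ⨅ g ∈ G, Ideal.comap (tact g) I

/-- `spec_w R`: primes `P` with `P ∩ {y₁,…,yₙ} = {yᵢ : i ∈ w}`. -/
def specW (k : Type*) [CommSemiring k] {n : ℕ} (w : Set (Fin n)) :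
    Set (Ideal (MvPolynomial (Fin n) k)) :=
  {P | P.IsPrime ∧ ∀ i, X i ∈ P ↔ i ∈ w}

/-- `max_w R = max R ∩ spec_w R`. -/
def maxW (k : Type*) [CommSemiring k] {n : ℕ} (w : Set (Fin n)) :
    Set (Ideal (MvPolynomial (Fin n) k)) :=
  {M | M.IsMaximal ∧ ∀ i, X i ∈ M ↔ i ∈ w}

/-- `𝒢-spec_w R = {(P : G_w) : P ∈ spec_w R}`. -/
def GspecW {k : Type*} [CommSemiring k] {n : ℕ}
    (G : Set (Fin n) → Subgroup (Fin n → kˣ)) (w : Set (Fin n)) :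
    Set (Ideal (MvPolynomial (Fin n) k)) :=
  {Q | ∃ P ∈ specW k w, Q = resT (G w) P}

/-- `𝒢-spec R`, the set of `𝒢`-prime ideals. -/
def GspecAll {k : Type*} [CommSemiring k] {n : ℕ}
    (G : Set (Fin n) → Subgroup (Fin n → kˣ)) :
    Set (Ideal (MvPolynomial (Fin n) k)) :=
  ⋃ w, GspecW G w

/-- `𝒢`-semiprime ideals: intersections of collections of `𝒢`-prime ideals. -/
def GSemiprime {k : Type*} [CommSemiring k] {n : ℕ}
    (G : Set (Fin n) → Subgroup (Fin n → kˣ))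
    (J : Ideal (MvPolynomial (Fin n) k)) : Prop :=
  ∃ T ⊆ GspecAll G, J = sInf T

/-- `𝒢-max_w R = {(M : G_w) : M ∈ max_w R}`. -/
def GmaxW {k : Type*} [CommSemiring k] {n : ℕ}
    (G : Set (Fin n) → Subgroup (Fin n → kˣ)) (w : Set (Fin n)) :
    Set (Ideal (MvPolynomial (Fin n) k)) :=
  {Q | ∃ M ∈ maxW k w, Q = resT (G w) M}

/-- `𝒢-max R`. -/
def GmaxAll {k : Type*} [CommSemiring k] {n : ℕ}
    (G : Set (Fin n) → Subgroup (Fin n → kˣ)) :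
    Set (Ideal (MvPolynomial (Fin n) k)) :=
  ⋃ w, GmaxW G w

/-- `P ↦ (P : 𝒢)`, i.e. `(P : G_w)` where `w = {i : yᵢ ∈ P}`. -/
noncomputable def Gquot {k : Type*} [CommSemiring k] {n : ℕ}
    (G : Set (Fin n) → Subgroup (Fin n → kˣ))
    (P : Ideal (MvPolynomial (Fin n) k)) : Ideal (MvPolynomial (Fin n) k) :=
  resT (G {i | X i ∈ P}) P

section aux
variable {k : Type*} [CommSemiring k] {n : ℕ}

lemma tact_X (g : Fin n → kˣ) (i : Fin n) : tact (k := k) g (X i) = (g i : k) • X i := by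
  simp [tact]

lemma tact_comp (g h : Fin n → kˣ) :
    (tact (k := k) g).comp (tact h) = tact (g * h) := by
  apply MvPolynomial.algHom_ext
  intro i
  simp [tact, smul_smul, mul_comm]

lemma tact_tact (g h : Fin n → kˣ) (x : MvPolynomial (Fin n) k) :
    tact g (tact h x) = tact (g * h) x := by
  rw [← tact_comp]; rfl

lemma tact_one : tact (k := k) (1 : Fin n → kˣ) = AlgHom.id k (MvPolynomial (Fin n) k) := by
  apply MvPolynomial.algHom_ext
  intro i
  simp [tact]

lemma mem_resT {G : Subgroup (Fin n → kˣ)} {I : Ideal (MvPolynomial (Fin n) k)}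
    {x : MvPolynomial (Fin n) k} : x ∈ resT G I ↔ ∀ g ∈ G, tact g x ∈ I := by
  simp [resT, Ideal.mem_iInf, Ideal.mem_comap]

lemma resT_le_comap {G : Subgroup (Fin n → kˣ)} {I : Ideal (MvPolynomial (Fin n) k)}
    {g : Fin n → kˣ} (hg : g ∈ G) : resT G I ≤ Ideal.comap (tact g) I := by
  intro x hx
  exact Ideal.mem_comap.mpr (mem_resT.mp hx g hg)

lemma resT_le_self {G : Subgroup (Fin n → kˣ)} {I : Ideal (MvPolynomial (Fin n) k)} :
    resT G I ≤ I := by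
  intro x hx
  have := mem_resT.mp hx 1 G.one_mem
  rwa [tact_one] at this

lemma resT_mono {G : Subgroup (Fin n → kˣ)} {I J : Ideal (MvPolynomial (Fin n) k)}
    (h : I ≤ J) : resT G I ≤ resT G J := by
  intro x hx
  exact mem_resT.mpr fun g hg => h (mem_resT.mp hx g hg)

lemma comap_resT_of_mem {G : Subgroup (Fin n → kˣ)} {I : Ideal (MvPolynomial (Fin n) k)}
    {h : Fin n → kˣ} (hh : h ∈ G) : (resT G I).comap (tact h) = resT G I := by
  ext x
  simp only [Ideal.mem_comap, mem_resT]
  constructor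
  · intro hx g hg
    have := hx (g * h⁻¹) (G.mul_mem hg (G.inv_mem hh))
    rwa [tact_tact, inv_mul_cancel_right] at this
  · intro hx g hg
    rw [tact_tact]
    exact hx (g * h) (G.mul_mem hg hh)

lemma resT_comap_of_mem {G : Subgroup (Fin n → kˣ)} {I : Ideal (MvPolynomial (Fin n) k)}
    {g₀ : Fin n → kˣ} (hg₀ : g₀ ∈ G) : resT G (I.comap (tact g₀)) = resT G I := by
  ext x
  simp only [mem_resT, Ideal.mem_comap]
  constructor
  · intro hx g hg
    have := hx (g₀⁻¹ * g) (G.mul_mem (G.inv_mem hg₀) hg)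
    rwa [tact_tact, mul_inv_cancel_left] at this
  · intro hx g hg
    rw [tact_tact]
    exact hx (g₀ * g) (G.mul_mem hg₀ hg)

lemma stable_le_resT {G : Subgroup (Fin n → kˣ)} {J P : Ideal (MvPolynomial (Fin n) k)}
    (hst : ∀ g ∈ G, J.comap (tact g) = J) (hJP : J ≤ P) : J ≤ resT G P := by
  intro x hx
  refine mem_resT.mpr fun g hg => ?_
  have : x ∈ J.comap (tact g) := (hst g hg).symm ▸ hx
  exact hJP (Ideal.mem_comap.mp this)

lemma X_mem_comap_tact {P : Ideal (MvPolynomial (Fin n) k)} (g : Fin n → kˣ) (i : Fin n) :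
    X i ∈ P.comap (tact g) ↔ X i ∈ P := by
  rw [Ideal.mem_comap, tact_X, smul_eq_C_mul]
  constructor
  · intro h
    have h2 := P.mul_mem_left (C ((g i)⁻¹ : kˣ)) h
    rwa [← mul_assoc, ← C_mul, Units.inv_mul, C_1, one_mul] at h2
  · intro h
    exact P.mul_mem_left _ h

end aux

/-- A prime minimal over an intersection of primes is contained in one of them. -/
lemma lemA {R : Type*} [CommRing R] [IsNoetherianRing R] {ι : Sort*} [Nonempty ι]
    (p : ι → Ideal R) (hp : ∀ i, (p i).IsPrime) (P : Ideal R) (hP : P.IsPrime)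
    (hle : (⨅ i, p i) ≤ P)
    (hmin : ∀ P' : Ideal R, P'.IsPrime → (⨅ i, p i) ≤ P' → P' ≤ P → P' = P) :
    ∃ i, P ≤ p i := by
  classical
  by_contra hcon
  push_neg at hcon
  set I := ⨅ i, p i with hI
  have hPmem : P ∈ I.minimalPrimes :=
    ⟨⟨hP, hle⟩, fun Q hQ hQP => (hmin Q hQ.1 hQ.2 hQP).ge⟩
  have hfin : I.minimalPrimes.Finite := by
    rw [Ideal.minimalPrimes_eq_comap]
    exact (minimalPrimes.finite_of_isNoetherianRing _).image _
  have hsInf : sInf I.minimalPrimes = I.radical := Ideal.sInf_minimalPrimes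
  have key : ∀ i, ∃ M ∈ I.minimalPrimes, M ≤ p i ∧ M ≠ P := by
    intro i
    have hrad : I.radical ≤ p i := by
      calc I.radical ≤ (p i).radical := Ideal.radical_mono (iInf_le p i)
        _ = p i := (hp i).radical
    have h1 : hfin.toFinset.inf id ≤ p i := by
      rw [Finset.inf_id_eq_sInf, hfin.coe_toFinset, hsInf]; exact hrad
    obtain ⟨M, hMs, hMle⟩ := ((hp i).inf_le').mp h1
    refine ⟨M, hfin.mem_toFinset.mp hMs, hMle, ?_⟩
    rintro rfl
    exact hcon i hMle
  have h2 : ∀ i, sInf (I.minimalPrimes \ {P}) ≤ p i := by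
    intro i
    obtain ⟨M, hM, hle', hne⟩ := key i
    exact le_trans (sInf_le ⟨hM, hne⟩) hle'
  have h3 : sInf (I.minimalPrimes \ {P}) ≤ P := le_trans (le_iInf h2) hle
  have hfin' : (I.minimalPrimes \ {P}).Finite := hfin.diff
  have h4 : hfin'.toFinset.inf id ≤ P := by
    rw [Finset.inf_id_eq_sInf, hfin'.coe_toFinset]; exact h3
  obtain ⟨M, hMs, hMP⟩ := (hP.inf_le').mp h4
  have hMmem := hfin'.mem_toFinset.mp hMs
  have hPM : P ≤ M := hPmem.2 hMmem.1.1 hMP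
  exact hMmem.2 (le_antisymm hMP hPM)

section mainaux
variable {k : Type*} [Field k] {n : ℕ}

lemma GspecW_stable {G : Set (Fin n) → Subgroup (Fin n → kˣ)} {v : Set (Fin n)}
    {Q : Ideal (MvPolynomial (Fin n) k)} (hQ : Q ∈ GspecW G v) :
    ∀ g ∈ G v, Q.comap (tact g) = Q := by
  obtain ⟨P, _, rfl⟩ := hQ
  intro g hg
  exact comap_resT_of_mem hg

lemma GspecW_vars {G : Set (Fin n) → Subgroup (Fin n → kˣ)} {v : Set (Fin n)}
    {Q : Ideal (MvPolynomial (Fin n) k)} (hQ : Q ∈ GspecW G v) :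
    ∀ i ∈ v, X i ∈ Q := by
  obtain ⟨P, hP, rfl⟩ := hQ
  intro i hi
  refine mem_resT.mpr fun g hg => ?_
  rw [tact_X, smul_eq_C_mul]
  exact Ideal.mul_mem_left _ _ ((hP.2 i).mpr hi)

end mainaux

/-- Lemma 2.3: `𝒢-spec R` satisfies the axioms (1.1): (a) for `P ∈ spec_w R`,
`(P : G_w)` is a `𝒢`-prime ideal contained in `P` containing every `𝒢`-semiprime ideal
contained in `P`; (b) if `Q ∈ 𝒢-spec_w R` and `P` is a prime minimal over `Q`, then
`P ∈ spec_w R` and `Q = (P : G_w)`. -/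
theorem stmt_8 {k : Type*} [Field k] {n : ℕ}
    (G : Set (Fin n) → Subgroup (Fin n → kˣ))
    (hcompat : ∀ v w : Set (Fin n), v ⊆ w → ∀ P ∈ specW k w,
      resT (G v) P ≤ resT (G w) P) :
    (∀ w : Set (Fin n), ∀ P ∈ specW k w,
        resT (G w) P ∈ GspecAll G ∧ resT (G w) P ≤ P ∧
        ∀ J : Ideal (MvPolynomial (Fin n) k), GSemiprime G J → J ≤ P → J ≤ resT (G w) P) ∧
    (∀ w : Set (Fin n), ∀ Q ∈ GspecW G w, ∀ P : Ideal (MvPolynomial (Fin n) k),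
        P.IsPrime → Q ≤ P →
        (∀ P' : Ideal (MvPolynomial (Fin n) k), P'.IsPrime → Q ≤ P' → P' ≤ P → P' = P) →
        P ∈ specW k w ∧ Q = resT (G w) P) := by
  classical
  constructor
  · intro w P hP
    refine ⟨Set.mem_iUnion.mpr ⟨w, ⟨P, hP, rfl⟩⟩, resT_le_self, ?_⟩
    rintro J ⟨T, hT, rfl⟩ hJP
    have : Fintype (Set (Fin n)) := Fintype.ofFinite _
    set Jv : Set (Fin n) → Ideal (MvPolynomial (Fin n) k) :=
      fun v => sInf (T ∩ GspecW G v) with hJv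
    have hinf : Finset.univ.inf Jv ≤ P := by
      refine le_trans ?_ hJP
      refine le_sInf fun Q hQT => ?_
      obtain ⟨v, hQv⟩ := Set.mem_iUnion.mp (hT hQT)
      calc Finset.univ.inf Jv ≤ Jv v := Finset.inf_le (Finset.mem_univ v)
        _ ≤ Q := sInf_le ⟨hQT, hQv⟩
    obtain ⟨v, _, hvP⟩ := (hP.1.inf_le').mp hinf
    have hne : (T ∩ GspecW G v).Nonempty := by
      by_contra h
      rw [Set.not_nonempty_iff_eq_empty] at h
      have : Jv v = ⊤ := by rw [hJv]; simp [h]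
      exact hP.1.ne_top (top_le_iff.mp (this ▸ hvP))
    have hvars : ∀ i ∈ v, X i ∈ Jv v := fun i hi =>
      Ideal.mem_sInf.mpr fun {Q} hQ => GspecW_vars hQ.2 i hi
    have hvw : v ⊆ w := fun i hi => (hP.2 i).mp (hvP (hvars i hi))
    have hstab : ∀ g ∈ G v, (Jv v).comap (tact g) = Jv v := by
      intro g hg
      ext x
      simp only [Ideal.mem_comap, hJv, Ideal.mem_sInf]
      constructor
      · intro hx Q hQ
        have : x ∈ Q.comap (tact g) := Ideal.mem_comap.mpr (hx hQ)
        rwa [GspecW_stable hQ.2 g hg] at this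
      · intro hx Q hQ
        have : x ∈ Q.comap (tact g) := (GspecW_stable hQ.2 g hg).symm ▸ hx hQ
        exact Ideal.mem_comap.mp this
    calc sInf T ≤ Jv v := sInf_le_sInf Set.inter_subset_left
      _ ≤ resT (G v) P := stable_le_resT hstab hvP
      _ ≤ resT (G w) P := hcompat v w hvw P hP
  · intro w Q hQ P hPpr hQP hmin
    obtain ⟨P₀, hP₀, rfl⟩ := hQ
    have hQeq : resT (G w) P₀ = ⨅ g : (G w), Ideal.comap (tact (g : Fin n → kˣ)) P₀ := by
      rw [resT, iInf_subtype]
    have : Nonempty (G w) := ⟨1⟩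
    have hP₀pr : P₀.IsPrime := hP₀.1
    obtain ⟨g₀, hg₀le⟩ :=
      lemA (fun g : (G w) => Ideal.comap (tact (g : Fin n → kˣ)) P₀)
        (fun g => Ideal.IsPrime.comap _) P hPpr (hQeq ▸ hQP)
        (fun P' h1 h2 h3 => hmin P' h1 (hQeq ▸ h2) h3)
    have hXiff : ∀ i, X i ∈ P ↔ i ∈ w := by
      intro i
      constructor
      · intro h
        exact (hP₀.2 i).mp ((X_mem_comap_tact (g₀ : Fin n → kˣ) i).mp (hg₀le h))
      · intro hi
        exact hQP (GspecW_vars ⟨P₀, hP₀, rfl⟩ i hi)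
    refine ⟨⟨hPpr, hXiff⟩, le_antisymm ?_ ?_⟩
    · exact stable_le_resT (fun g hg => comap_resT_of_mem hg) hQP
    · calc resT (G w) P ≤ resT (G w) (Ideal.comap (tact (g₀ : Fin n → kˣ)) P₀) :=
          resT_mono hg₀le
        _ = resT (G w) P₀ := resT_comap_of_mem g₀.2
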